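/- Suppose H is a symmetric positive definite n×n matrix, a > 0, b > 0, c < 0, ab - c² > 0, and suppose K_a > 0, K_b < 0, b K_a = c K_b, and K_c = a/c. Then for all (λ, v) ≠ (0, 0) with v ≠ 0, the expression £V = (-a + c K_c)⟨λ, H v⟩ + (-c + b K_c)⟨v, H v⟩ + ⟨cλ + bv, K_a λ + K_b v⟩ is strictly negative; moreover £V ≤ 0 for all (λ, v). -/

import Mathlib

open Matrix

/-- Proposition 1: under the stated gain conditions the Lie derivative is
strictly negative whenever v ≠ 0, and nonpositive everywhere. -/
theorem lie_derivative_negative {n : ℕ} (a b c Ka Kb Kc : ℝ)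
    (ha : 0 < a) (hb : 0 < b) (hc : c < 0) (habc : 0 < a * b - c ^ 2)
    (hKa : 0 < Ka) (hKb : Kb < 0) (hKab : b * Ka = c * Kb) (hKc : Kc = a / c)
    (H : Matrix (Fin n) (Fin n) ℝ) (hH : H.PosDef) :
    ∀ l v : Fin n → ℝ,
      (v ≠ 0 →
        (-a + c * Kc) * (l ⬝ᵥ H.mulVec v)
          + (-c + b * Kc) * (v ⬝ᵥ H.mulVec v)
          + (c • l + b • v) ⬝ᵥ (Ka • l + Kb • v) < 0) ∧
      (-a + c * Kc) * (l ⬝ᵥ H.mulVec v)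
        + (-c + b * Kc) * (v ⬝ᵥ H.mulVec v)
        + (c • l + b • v) ⬝ᵥ (Ka • l + Kb • v) ≤ 0 := by
  intro l v
  have hc0 : c ≠ 0 := ne_of_lt hc
  have hKa0 : Ka ≠ 0 := ne_of_gt hKa
  -- first coefficient is zero
  have h1 : -a + c * Kc = 0 := by
    rw [hKc]; field_simp; ring
  -- second coefficient is negative
  have h2 : -c + b * Kc < 0 := by
    rw [hKc]
    have : -c + b * (a / c) = (a * b - c ^ 2) / c := by field_simp; ring
    rw [this]
    exact div_neg_of_pos_of_neg habc hc
  -- third term rewriting: c•l + b•v = (c/Ka) • (Ka•l + Kb•v)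
  have hvec : c • l + b • v = (c / Ka) • (Ka • l + Kb • v) := by
    funext i
    simp only [Pi.add_apply, Pi.smul_apply, smul_eq_mul]
    have hb' : b = c * Kb / Ka := by field_simp; linarith [hKab]
    rw [hb']; field_simp
  set w : Fin n → ℝ := Ka • l + Kb • v with hw
  have h3 : (c • l + b • v) ⬝ᵥ w = (c / Ka) * (w ⬝ᵥ w) := by
    rw [hvec, smul_dotProduct]; rfl
  have hww : 0 ≤ w ⬝ᵥ w := by
    apply Finset.sum_nonneg
    intro i _
    exact mul_self_nonneg _
  have h3le : (c • l + b • v) ⬝ᵥ w ≤ 0 := by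
    rw [h3]
    exact mul_nonpos_of_nonpos_of_nonneg (le_of_lt (div_neg_of_neg_of_pos hc hKa)) hww
  have hQ : 0 ≤ v ⬝ᵥ H.mulVec v := by simpa using hH.posSemidef.dotProduct_mulVec_nonneg v
  constructor
  · intro hv
    have hQpos : 0 < v ⬝ᵥ H.mulVec v := by simpa using hH.dotProduct_mulVec_pos hv
    have h2t : (-c + b * Kc) * (v ⬝ᵥ H.mulVec v) < 0 :=
      mul_neg_of_neg_of_pos h2 hQpos
    rw [h1, zero_mul, zero_add]; linarith
  · have h2t : (-c + b * Kc) * (v ⬝ᵥ H.mulVec v) ≤ 0 :=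
      mul_nonpos_of_nonpos_of_nonneg (le_of_lt h2) hQ
    rw [h1, zero_mul, zero_add]; linarith
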